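/- Under the same hypotheses (‖M̂_a − M_a‖₂ ≤ ε, all finite products of the M_a bounded in spectral norm by √d), for every n and a₁,…,aₙ: ‖∏_{i=1}^n M̂_{a_i} − ∏_{i=1}^n M_{a_i}‖₂ ≤ d·(1+ε√d)^{n−1}·nε. -/
import Mathlib


open Matrix

/-- Spectral (ℓ²-operator) norm of a real square matrix. -/
noncomputable def specNorm {d : ℕ} (M : Matrix (Fin d) (Fin d) ℝ) : ℝ :=
  ‖Matrix.toEuclideanCLM (𝕜 := ℝ) M‖

lemma specNorm_nonneg {d : ℕ} (M : Matrix (Fin d) (Fin d) ℝ) : 0 ≤ specNorm M :=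
  norm_nonneg _

lemma specNorm_mul_le {d : ℕ} (X Y : Matrix (Fin d) (Fin d) ℝ) :
    specNorm (X * Y) ≤ specNorm X * specNorm Y := by
  unfold specNorm; rw [_root_.map_mul]; exact norm_mul_le _ _

lemma specNorm_add_le {d : ℕ} (X Y : Matrix (Fin d) (Fin d) ℝ) :
    specNorm (X + Y) ≤ specNorm X + specNorm Y := by
  unfold specNorm; rw [_root_.map_add]; exact norm_add_le _ _

lemma specNorm_zero {d : ℕ} : specNorm (0 : Matrix (Fin d) (Fin d) ℝ) = 0 := by
  unfold specNorm; rw [_root_.map_zero]; exact norm_zero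

-- list form of the product hypothesis
lemma prod_list_le {d : ℕ} {A : Type*} (M : A → Matrix (Fin d) (Fin d) ℝ)
    (hprod : ∀ (k : ℕ) (w : Fin k → A),
      specNorm ((List.ofFn fun i => M (w i)).prod) ≤ Real.sqrt d)
    (l : List A) : specNorm ((l.map M).prod) ≤ Real.sqrt d := by
  have h := hprod l.length l.get
  have : (List.ofFn fun i => M (l.get i)) = l.map M := by
    show List.ofFn (M ∘ l.get) = _
    rw [← List.map_ofFn, List.ofFn_get]
  rwa [this] at h

lemma key_lemma {d : ℕ} {A : Type*} (M Mh : A → Matrix (Fin d) (Fin d) ℝ) (ε : ℝ)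
    (hest : ∀ a, specNorm (Mh a - M a) ≤ ε)
    (hM : ∀ l : List A, specNorm ((l.map M).prod) ≤ Real.sqrt d) :
    ∀ (l l₀ : List A),
      specNorm ((l₀.map M).prod * ((l.map Mh).prod - (l.map M).prod)) ≤
        Real.sqrt d * ((1 + ε * Real.sqrt d) ^ l.length - 1) := by
  intro l
  induction l with
  | nil => intro l₀; simp [specNorm_zero]
  | cons a l ih =>
    intro l₀
    have hε : (0:ℝ) ≤ ε := le_trans (specNorm_nonneg _) (hest a)
    have hsd : (0:ℝ) ≤ Real.sqrt d := Real.sqrt_nonneg _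
    set x := ε * Real.sqrt d with hx
    have hx0 : (0:ℝ) ≤ x := mul_nonneg hε hsd
    have hpow : (0:ℝ) ≤ (1 + x) ^ l.length := pow_nonneg (by linarith) _
    -- bound on specNorm of (l.map Mh).prod
    have hPh : specNorm ((l.map Mh).prod) ≤ Real.sqrt d * (1 + x) ^ l.length := by
      have h1 := ih []
      simp only [List.map_nil, List.prod_nil, one_mul] at h1
      have h2 : specNorm ((l.map Mh).prod) ≤
          specNorm ((l.map Mh).prod - (l.map M).prod) + specNorm ((l.map M).prod) := by
        have := specNorm_add_le ((l.map Mh).prod - (l.map M).prod) ((l.map M).prod)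
        simpa using this
      have h3 := hM l
      nlinarith [h1, h2, h3]
    -- decomposition
    have hdec : (l₀.map M).prod * (((a :: l).map Mh).prod - ((a :: l).map M).prod)
        = (l₀.map M).prod * ((Mh a - M a) * (l.map Mh).prod)
          + ((l₀ ++ [a]).map M).prod * ((l.map Mh).prod - (l.map M).prod) := by
      simp only [List.map_cons, List.prod_cons, List.map_append, List.prod_append,
        List.map_singleton, List.prod_singleton, List.map_nil, List.prod_nil, mul_one]
      noncomm_ring
    rw [hdec]
    have t1 : specNorm ((l₀.map M).prod * ((Mh a - M a) * (l.map Mh).prod)) ≤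
        Real.sqrt d * (ε * (Real.sqrt d * (1 + x) ^ l.length)) := by
      calc specNorm ((l₀.map M).prod * ((Mh a - M a) * (l.map Mh).prod))
          ≤ specNorm ((l₀.map M).prod) * specNorm ((Mh a - M a) * (l.map Mh).prod) :=
            specNorm_mul_le _ _
        _ ≤ specNorm ((l₀.map M).prod) * (specNorm (Mh a - M a) * specNorm ((l.map Mh).prod)) := by
            apply mul_le_mul_of_nonneg_left (specNorm_mul_le _ _) (specNorm_nonneg _)
        _ ≤ Real.sqrt d * (ε * (Real.sqrt d * (1 + x) ^ l.length)) := by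
            apply mul_le_mul (hM l₀)
            · exact mul_le_mul (hest a) hPh (specNorm_nonneg _) hε
            · exact mul_nonneg (specNorm_nonneg _) (specNorm_nonneg _)
            · exact hsd
    have t2 := ih (l₀ ++ [a])
    calc specNorm _ ≤ _ + _ := specNorm_add_le _ _
      _ ≤ Real.sqrt d * (ε * (Real.sqrt d * (1 + x) ^ l.length))
          + Real.sqrt d * ((1 + x) ^ l.length - 1) := add_le_add t1 t2
      _ = Real.sqrt d * ((1 + x) ^ (a :: l).length - 1) := by
          simp only [List.length_cons, pow_succ]
          ring

lemma pow_ineq (x : ℝ) (hx : 0 ≤ x) : ∀ m : ℕ, (1 + x) ^ (m + 1) - 1 ≤ (m + 1) * x * (1 + x) ^ m := by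
  intro m
  induction m with
  | zero => simp
  | succ m ih =>
    have h1 : (1:ℝ) ≤ (1 + x) ^ (m + 1) := one_le_pow₀ (by linarith)
    have hp : (0:ℝ) ≤ (1 + x) ^ m := pow_nonneg (by linarith) _
    have : (1 + x) ^ (m + 1 + 1) - 1 = (1 + x) * ((1 + x) ^ (m + 1) - 1) + x := by ring
    rw [this]
    push_cast
    have h4 : (1+x) * ((1+x)^(m+1) - 1) ≤ ((m:ℝ)+1) * x * (1+x)^(m+1) := by
      calc (1+x)*((1+x)^(m+1)-1) ≤ (1+x)*(((m:ℝ)+1)*x*(1+x)^m) :=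
            mul_le_mul_of_nonneg_left ih (by linarith)
        _ = ((m:ℝ)+1)*x*(1+x)^(m+1) := by rw [pow_succ]; ring
    have h6 : x ≤ x * (1+x)^(m+1) := by nlinarith
    linarith

/-- If ‖M̂_a − M_a‖₂ ≤ ε for all a, and every finite product of the true
matrices has spectral norm ≤ √d, then
‖∏_{i=1}^n M̂_{a_i} − ∏_{i=1}^n M_{a_i}‖₂ ≤ d·(1+ε√d)^{n−1}·nε. -/
theorem stmt6 {d : ℕ} {A : Type*} [Fintype A]
    (M Mh : A → Matrix (Fin d) (Fin d) ℝ) (ε : ℝ)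
    (hest : ∀ a, specNorm (Mh a - M a) ≤ ε)
    (hprod : ∀ (k : ℕ) (w : Fin k → A),
      specNorm ((List.ofFn fun i => M (w i)).prod) ≤ Real.sqrt d)
    (n : ℕ) (w : Fin n → A) :
    specNorm ((List.ofFn fun i => Mh (w i)).prod - (List.ofFn fun i => M (w i)).prod) ≤
      d * (1 + ε * Real.sqrt d) ^ (n - 1) * n * ε := by
  have hM := prod_list_le M hprod
  cases n with
  | zero => simp [specNorm_zero]
  | succ m =>
    have hε : (0:ℝ) ≤ ε := le_trans (specNorm_nonneg _) (hest (w 0))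
    have hsd : (0:ℝ) ≤ Real.sqrt d := Real.sqrt_nonneg _
    set x := ε * Real.sqrt d with hx
    have hx0 : (0:ℝ) ≤ x := mul_nonneg hε hsd
    have heq1 : (List.ofFn fun i => Mh (w i)) = (List.ofFn w).map Mh := by
      show List.ofFn (Mh ∘ w) = _
      rw [List.map_ofFn]
    have heq2 : (List.ofFn fun i => M (w i)) = (List.ofFn w).map M := by
      show List.ofFn (M ∘ w) = _
      rw [List.map_ofFn]
    rw [heq1, heq2]
    have hkey := key_lemma M Mh ε hest hM (List.ofFn w) []
    simp only [List.map_nil, List.prod_nil, one_mul, List.length_ofFn] at hkey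
    have h2 := pow_ineq x hx0 m
    have hdd : Real.sqrt d * Real.sqrt d = d := Real.mul_self_sqrt (Nat.cast_nonneg d)
    have hp : (0:ℝ) ≤ (1 + x) ^ m := pow_nonneg (by linarith) _
    calc specNorm _ ≤ Real.sqrt d * ((1 + x) ^ (m + 1) - 1) := hkey
      _ ≤ Real.sqrt d * ((m + 1) * x * (1 + x) ^ m) := by
          apply mul_le_mul_of_nonneg_left h2 hsd
      _ = (d:ℝ) * (1 + x) ^ (m + 1 - 1) * (m + 1) * ε := by
          simp only [Nat.add_sub_cancel, hx]
          linear_combination (((m:ℝ)+1)*ε*(1+ε*Real.sqrt d)^m) * hdd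
      _ = (d:ℝ) * (1 + x) ^ (Nat.succ m - 1) * (Nat.succ m) * ε := by norm_num
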